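/- Let X be a chain connected uniform space with basepoint ∗ and E a symmetric entourage. Let X_E be the set of E-homotopy classes [α]_E of E-chains α starting at ∗, and let φ : X_E → X be the endpoint map φ([∗ = x₀, …, xₙ]_E) = xₙ. For a symmetric entourage D ⊆ E, let D* ⊆ X_E × X_E be the set of pairs ([α]_E, [β]_E) admitting representatives α = (∗ = x₀, …, xₙ, y) and β = (∗ = x₀, …, xₙ, z) with (y,z) ∈ D. Then: (1) φ is injective on every E*-ball B([γ]_E, E*); (2) for every such D and every [α]_E, φ(B([α]_E, D*)) = B(φ([α]_E), D), and the image of D* under φ × φ is D; (3) the family {D* : D a symmetric entourage of X with D ⊆ E} is a base for a uniformity on X_E: each D* is symmetric and contains the diagonal, (D ∩ D′)* ⊆ D* ∩ D′*, and for every D there is a symmetric entourage G ⊆ E with G*∘G* ⊆ D*. -/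

import Mathlib

open UniformSpace

universe u v

/-- A uniform space is *chain connected* if every uniformly continuous function from it
into a discrete uniform space is constant. -/
def ChainConnected (X : Type u) [UniformSpace X] : Prop :=
  ∀ (Y : Type v) (f : X → Y), @UniformContinuous X Y _ ⊥ f → ∀ x y : X, f x = f y

/-- `l` is a (nonempty) `E`-chain, i.e. a finite sequence of points with all consecutive
pairs in `E`. -/
def IsChainList {X : Type u} (E : Set (X × X)) (l : List X) : Prop :=
  l ≠ [] ∧ l.Chain' (fun a b => (a, b) ∈ E)

/-- `l'` is an (elementary) `E`-extension of `l`: it is obtained from `l` by inserting one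
point, leaving the endpoints fixed, and both `l` and `l'` are `E`-chains. -/
def ChainExt {X : Type u} (E : Set (X × X)) (l l' : List X) : Prop :=
  (∃ (s t : List X) (x : X), l = s ++ t ∧ l' = s ++ x :: t) ∧
    l.head? = l'.head? ∧ l.getLast? = l'.getLast? ∧
    l.Chain' (fun a b => (a, b) ∈ E) ∧ l'.Chain' (fun a b => (a, b) ∈ E)

/-- Two chains are `E`-homotopic if they are related by the equivalence relation generated
by one-point `E`-extensions. -/
def ChainHomotopic {X : Type u} (E : Set (X × X)) : List X → List X → Prop :=
  Relation.EqvGen (ChainExt E)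

theorem ChainHomotopic.getLast?_eq {X : Type u} {E : Set (X × X)} {l l' : List X}
    (h : ChainHomotopic E l l') : l.getLast? = l'.getLast? := by
  induction h with
  | rel _ _ h => exact h.2.2.1
  | refl _ => rfl
  | symm _ _ _ ih => exact ih.symm
  | trans _ _ _ _ _ ih₁ ih₂ => exact ih₁.trans ih₂

/-- The `E`-chains in `X` starting at the basepoint `b`. -/
def ChainsFrom {X : Type u} (E : Set (X × X)) (b : X) : Type u :=
  {l : List X // IsChainList E l ∧ l.head? = some b}

/-- `E`-homotopy as a setoid on the `E`-chains starting at `b`. -/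
def chainSetoid {X : Type u} (E : Set (X × X)) (b : X) : Setoid (ChainsFrom E b) where
  r α β := ChainHomotopic E α.1 β.1
  iseqv := ⟨fun _ => Relation.EqvGen.refl _,
    fun h => Relation.EqvGen.symm _ _ h,
    fun h h' => Relation.EqvGen.trans _ _ _ h h'⟩

/-- `X_E`: the set of `E`-homotopy classes of `E`-chains starting at the basepoint `b`. -/
def SpaceXE {X : Type u} (E : Set (X × X)) (b : X) : Type u :=
  Quotient (chainSetoid E b)

/-- The endpoint map `φ : X_E → X`, sending the class of a chain to its last point. -/
def endpointMap {X : Type u} (E : Set (X × X)) (b : X) : SpaceXE E b → X :=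
  Quotient.lift (fun α : ChainsFrom E b => α.1.getLastD b)
    (fun α β h => by
      have h' : α.1.getLast? = β.1.getLast? := ChainHomotopic.getLast?_eq h
      simp only [List.getLastD_eq_getLast?, h'])

/-- The entourage `D*` on `X_E`: a pair of classes lies in `D*` iff it admits representatives
`(∗ = x₀, …, xₙ, y)` and `(∗ = x₀, …, xₙ, z)` with `(y, z) ∈ D`. -/
def starRel {X : Type u} (E : Set (X × X)) (b : X) (D : Set (X × X)) :
    Set (SpaceXE E b × SpaceXE E b) :=
  {p | ∃ (α β : ChainsFrom E b) (s : List X) (y z : X), s ≠ [] ∧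
      α.1 = s ++ [y] ∧ β.1 = s ++ [z] ∧ (y, z) ∈ D ∧
      p.1 = Quotient.mk (chainSetoid E b) α ∧ p.2 = Quotient.mk (chainSetoid E b) β}

/-- The identity relation (Mathlib's former `idRel`). -/
def idRel {α : Type*} : Set (α × α) :=
  { p : α × α | p.1 = p.2 }

/-- Composition of relations (Mathlib's former `compRel`). -/
def compRel {α : Type*} (r₁ r₂ : Set (α × α)) : Set (α × α) :=
  { p : α × α | ∃ z : α, (p.1, z) ∈ r₁ ∧ (z, p.2) ∈ r₂ }

/-- A relation is symmetric (Mathlib's former `SymmetricRel`). -/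
def SymmetricRel {α : Type*} (V : Set (α × α)) : Prop :=
  Prod.swap ⁻¹' V = V

theorem SymmetricRel.mk_mem_comm {α : Type*} {V : Set (α × α)} (h : SymmetricRel V) {x y : α} :
    (x, y) ∈ V ↔ (y, x) ∈ V := by
  constructor
  · intro hxy
    have h' : (y, x) ∈ Prod.swap ⁻¹' V := hxy
    rwa [h] at h'
  · intro hyx
    have h' : (x, y) ∈ Prod.swap ⁻¹' V := hyx
    rwa [h] at h'

theorem mem_idRel {α : Type*} {a b : α} : (a, b) ∈ (idRel : Set (α × α)) ↔ a = b := Iff.rfl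

section Aux

variable {X : Type u} {E : Set (X × X)}

theorem my_head?_append {l l' : List X} (h : l ≠ []) : (l ++ l').head? = l.head? := by
  cases l with
  | nil => exact absurd rfl h
  | cons a t => rfl

theorem my_exists_getLast? {l : List X} (h : l ≠ []) : ∃ y, l.getLast? = some y := by
  cases hl : l.getLast? with
  | none => exact absurd (List.getLast?_eq_none_iff.mp hl) h
  | some y => exact ⟨y, rfl⟩

/-- Appending a fixed point `z` (with `(last, z) ∈ E`) preserves `E`-homotopy. -/
theorem my_hom_append (z : X) :
    ∀ {l l' : List X}, ChainHomotopic E l l' →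
      (∀ w, l.getLast? = some w → (w, z) ∈ E) →
      ChainHomotopic E (l ++ [z]) (l' ++ [z]) := by
  intro l l' h
  induction h with
  | rel a b hab =>
    intro hz
    obtain ⟨⟨s, t, x, hs, ht⟩, hhead, hlast, hca, hcb⟩ := hab
    have hb : b ≠ [] := by rw [ht]; simp
    have ha : a ≠ [] := by
      rintro rfl
      obtain ⟨rfl, rfl⟩ := List.append_eq_nil_iff.mp hs.symm
      simp [ht] at hhead
    refine Relation.EqvGen.rel _ _ ⟨⟨s, t ++ [z], x, ?_, ?_⟩, ?_, ?_, ?_, ?_⟩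
    · rw [hs, List.append_assoc]
    · rw [ht]; simp
    · rw [my_head?_append ha, my_head?_append hb, hhead]
    · simp
    · refine List.isChain_append.mpr ?_
      refine ⟨hca, List.isChain_singleton z, ?_⟩
      intro p hp q hq
      simp only [List.head?_cons, Option.mem_def, Option.some.injEq] at hq
      subst hq
      exact hz p hp
    · refine List.isChain_append.mpr ?_
      refine ⟨hcb, List.isChain_singleton z, ?_⟩
      intro p hp q hq
      simp only [List.head?_cons, Option.mem_def, Option.some.injEq] at hq
      subst hq
      exact hz p (by rw [hlast]; exact hp)
  | refl a => intro _; exact Relation.EqvGen.refl _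
  | symm a b h ih =>
    intro hz
    have hz' : ∀ w, a.getLast? = some w → (w, z) ∈ E := by
      intro w hw
      exact hz w (by rw [← ChainHomotopic.getLast?_eq h]; exact hw)
    exact Relation.EqvGen.symm _ _ (ih hz')
  | trans a b c h₁ h₂ ih₁ ih₂ =>
    intro hz
    refine Relation.EqvGen.trans _ _ _ (ih₁ hz) (ih₂ ?_)
    intro w hw
    exact hz w (by rw [ChainHomotopic.getLast?_eq h₁]; exact hw)

/-- Inserting a point `y` just before the final point `z`. -/
theorem my_hom_insert {s : List X} {y z : X} (hs : s ≠ [])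
    (h1 : (s ++ [z]).Chain' (fun a b => (a, b) ∈ E))
    (h2 : (s ++ [y]).Chain' (fun a b => (a, b) ∈ E))
    (hyz : (y, z) ∈ E) :
    ChainHomotopic E (s ++ [z]) ((s ++ [y]) ++ [z]) := by
  refine Relation.EqvGen.rel _ _ ⟨⟨s, [z], y, rfl, by simp⟩, ?_, ?_, h1, ?_⟩
  · rw [my_head?_append hs, my_head?_append (by simp : s ++ [y] ≠ []), my_head?_append hs]
  · simp
  · refine List.isChain_append.mpr ?_
    refine ⟨h2, List.isChain_singleton z, ?_⟩
    intro p hp q hq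
    simp only [List.getLast?_concat, Option.mem_def, Option.some.injEq] at hp
    simp only [List.head?_cons, Option.mem_def, Option.some.injEq] at hq
    subst hp; subst hq
    exact hyz

/-- Duplicating the last point of a chain. -/
theorem my_hom_dup {l : List X} {y : X} (hl : l ≠ [])
    (hc : l.Chain' (fun a b => (a, b) ∈ E)) (hy : l.getLast? = some y)
    (hyy : (y, y) ∈ E) : ChainHomotopic E l (l ++ [y]) := by
  refine Relation.EqvGen.rel _ _
    ⟨⟨l, [], y, (List.append_nil l).symm, rfl⟩, (my_head?_append hl).symm, ?_, hc, ?_⟩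
  · rw [hy]; simp
  · refine List.isChain_append.mpr ?_
    refine ⟨hc, List.isChain_singleton _, ?_⟩
    intro p hp q hq
    simp only [hy, Option.mem_def, Option.some.injEq] at hp
    simp only [List.head?_cons, Option.mem_def, Option.some.injEq] at hq
    subst hp; subst hq
    exact hyy

end Aux

theorem endpointMap_mk {X : Type u} (E : Set (X × X)) (b : X) (α : ChainsFrom E b) :
    endpointMap E b (Quotient.mk (chainSetoid E b) α) = α.1.getLastD b := rfl

/-- Chain connectedness yields an `E`-chain from `bp` to any point. -/
theorem my_exists_chainList {X : Type u} [UniformSpace X] (hcc : ChainConnected.{u, v} X)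
    {E : Set (X × X)} (hE : E ∈ uniformity X) (hEsym : SymmetricRel E) (bp y : X) :
    ∃ l : List X, l ≠ [] ∧ l.Chain' (fun a b => (a, b) ∈ E) ∧
      l.head? = some bp ∧ l.getLast? = some y := by
  classical
  set r : X → X → Prop := fun a b => (a, b) ∈ E with hr
  have hrsym : Symmetric r := fun a b hab => hEsym.mk_mem_comm.mp hab
  have key : ∀ c : X, Relation.ReflTransGen r bp c → ∃ l : List X, l ≠ [] ∧
      l.Chain' (fun a b => (a, b) ∈ E) ∧ l.head? = some bp ∧ l.getLast? = some c := by
    intro c h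
    induction h with
    | refl => exact ⟨[bp], by simp, List.isChain_singleton _, rfl, rfl⟩
    | @tail b c hab hbc ih =>
      obtain ⟨l, hne, hc, hh, hl⟩ := ih
      refine ⟨l ++ [c], by simp, ?_, by rw [my_head?_append hne, hh], by simp⟩
      refine List.isChain_append.mpr ?_
      refine ⟨hc, List.isChain_singleton _, ?_⟩
      intro p hp q hq
      simp only [hl, Option.mem_def, Option.some.injEq] at hp
      simp only [List.head?_cons, Option.mem_def, Option.some.injEq] at hq
      subst hp; subst hq
      exact hbc
  refine key y ?_
  by_contra hcon
  let f : X → ULift.{v} Bool :=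
    fun x => if Relation.ReflTransGen r x y then ULift.up true else ULift.up false
  have hf : @UniformContinuous X (ULift.{v} Bool) _ ⊥ f := by
    unfold UniformContinuous
    rw [show (@uniformity (ULift.{v} Bool) ⊥) = Filter.principal idRel from rfl,
      Filter.tendsto_principal]
    refine Filter.mem_of_superset hE ?_
    rintro ⟨a, b⟩ hab
    have hiff : Relation.ReflTransGen r a y ↔ Relation.ReflTransGen r b y := by
      constructor
      · intro h; exact Relation.ReflTransGen.head (hrsym hab) h
      · intro h; exact Relation.ReflTransGen.head hab h
    show (f a, f b) ∈ idRel
    rw [mem_idRel]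
    simp only [f]
    by_cases h : Relation.ReflTransGen r a y
    · rw [if_pos h, if_pos (hiff.mp h)]
    · rw [if_neg h, if_neg (fun h' => h (hiff.mpr h'))]
  have hby := hcc (ULift.{v} Bool) f hf bp y
  simp only [f, if_neg hcon, if_pos Relation.ReflTransGen.refl] at hby
  simp at hby

/-- Key construction: extend a representative by one `D`-step. -/
theorem my_rep_snoc {X : Type u} {E : Set (X × X)} {bp : X}
    (hrefl : ∀ x : X, (x, x) ∈ E) (α : ChainsFrom E bp) {y : X}
    (hy : α.1.getLast? = some y) {D : Set (X × X)} {z : X} (hz : (y, z) ∈ D)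
    (hzE : (y, z) ∈ E) :
    ∃ β : ChainsFrom E bp, β.1 = α.1 ++ [z] ∧ β.1.getLast? = some z ∧
      (Quotient.mk (chainSetoid E bp) α, Quotient.mk (chainSetoid E bp) β)
        ∈ starRel E bp D := by
  obtain ⟨l, ⟨⟨hne, hchain⟩, hhead⟩⟩ := α
  simp only at hy
  have hcy : (l ++ [y]).Chain' (fun a b => (a, b) ∈ E) := by
    refine List.isChain_append.mpr ?_
    refine ⟨hchain, List.isChain_singleton _, ?_⟩
    intro p hp q hq
    simp only [hy, Option.mem_def, Option.some.injEq] at hp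
    simp only [List.head?_cons, Option.mem_def, Option.some.injEq] at hq
    subst hp; subst hq; exact hrefl y
  have hcz : (l ++ [z]).Chain' (fun a b => (a, b) ∈ E) := by
    refine List.isChain_append.mpr ?_
    refine ⟨hchain, List.isChain_singleton _, ?_⟩
    intro p hp q hq
    simp only [hy, Option.mem_def, Option.some.injEq] at hp
    simp only [List.head?_cons, Option.mem_def, Option.some.injEq] at hq
    subst hp; subst hq; exact hzE
  refine ⟨⟨l ++ [z], ⟨⟨by simp, hcz⟩, by rw [my_head?_append hne]; exact hhead⟩⟩,
    rfl, by simp, ?_⟩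
  refine ⟨⟨l ++ [y], ⟨⟨by simp, hcy⟩, by rw [my_head?_append hne]; exact hhead⟩⟩, _,
    l, y, z, hne, rfl, rfl, hz, ?_, rfl⟩
  exact Quotient.sound (my_hom_dup hne hchain hy (hrefl y))

/-- (Statement 19) Properties of the endpoint map `φ : X_E → X` and of the entourages `D*`
for a chain connected uniform space `X` with basepoint `∗` and symmetric entourage `E`:
(1) `φ` is injective on every `E*`-ball;
(2) for every symmetric entourage `D ⊆ E` and every class `a`,
    `φ(B(a, D*)) = B(φ(a), D)`, and the image of `D*` under `φ × φ` is `D`;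
(3) the family of the `D*` is a base for a uniformity on `X_E`: each `D*` is symmetric and
    contains the diagonal, `(D ∩ D′)* ⊆ D* ∩ D′*`, and for every `D` there is a symmetric
    entourage `G ⊆ E` with `G* ∘ G* ⊆ D*`. -/
theorem spaceXE_uniformity_base {X : Type u} [UniformSpace X] (bp : X)
    (hcc : ChainConnected.{u, v} X)
    (E : Set (X × X)) (hE : E ∈ uniformity X) (hEsym : SymmetricRel E) :
    (∀ γ : SpaceXE E bp, ∀ a ∈ {c | (γ, c) ∈ starRel E bp E},
      ∀ b ∈ {c | (γ, c) ∈ starRel E bp E},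
        endpointMap E bp a = endpointMap E bp b → a = b) ∧
    (∀ D ∈ uniformity X, SymmetricRel D → D ⊆ E →
      (∀ a : SpaceXE E bp,
        endpointMap E bp '' {c | (a, c) ∈ starRel E bp D} =
          ball (endpointMap E bp a) D) ∧
      (fun p : SpaceXE E bp × SpaceXE E bp =>
        (endpointMap E bp p.1, endpointMap E bp p.2)) '' starRel E bp D = D) ∧
    (∀ D ∈ uniformity X, SymmetricRel D → D ⊆ E →
      SymmetricRel (starRel E bp D) ∧ idRel ⊆ starRel E bp D) ∧
    (∀ D ∈ uniformity X, SymmetricRel D → D ⊆ E →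
      ∀ D' ∈ uniformity X, SymmetricRel D' → D' ⊆ E →
        starRel E bp (D ∩ D') ⊆ starRel E bp D ∩ starRel E bp D') ∧
    (∀ D ∈ uniformity X, SymmetricRel D → D ⊆ E →
      ∃ G ∈ uniformity X, SymmetricRel G ∧ G ⊆ E ∧
        compRel (starRel E bp G) (starRel E bp G) ⊆ starRel E bp D) := by
  have hErefl : ∀ x : X, (x, x) ∈ E := fun x => refl_mem_uniformity hE
  refine ⟨?_, ?_, ?_, ?_, ?_⟩
  · -- (1) injectivity on E*-balls
    intro γ a ha b hb heq
    obtain ⟨α₁, β₁, s, y, z, hs, hα₁, hβ₁, hyz, hγ₁, hA⟩ := ha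
    obtain ⟨α₂, β₂, s', y', z', hs', hα₂, hβ₂, hyz', hγ₂, hB⟩ := hb
    replace hγ₁ : γ = Quotient.mk (chainSetoid E bp) α₁ := hγ₁
    replace hA : a = Quotient.mk (chainSetoid E bp) β₁ := hA
    replace hγ₂ : γ = Quotient.mk (chainSetoid E bp) α₂ := hγ₂
    replace hB : b = Quotient.mk (chainSetoid E bp) β₂ := hB
    have h1 : endpointMap E bp a = z := by
      rw [hA, endpointMap_mk, hβ₁, List.getLastD_concat]
    have h2 : endpointMap E bp b = z' := by
      rw [hB, endpointMap_mk, hβ₂, List.getLastD_concat]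
    rw [h1, h2] at heq
    subst heq
    have hcα₁ : (s ++ [y]).Chain' (fun p q => (p, q) ∈ E) := by
      rw [← hα₁]; exact α₁.2.1.2
    have hcβ₁ : (s ++ [z]).Chain' (fun p q => (p, q) ∈ E) := by
      rw [← hβ₁]; exact β₁.2.1.2
    have hcα₂ : (s' ++ [y']).Chain' (fun p q => (p, q) ∈ E) := by
      rw [← hα₂]; exact α₂.2.1.2
    have hcβ₂ : (s' ++ [z]).Chain' (fun p q => (p, q) ∈ E) := by
      rw [← hβ₂]; exact β₂.2.1.2
    have hαα : ChainHomotopic E (s ++ [y]) (s' ++ [y']) := by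
      have h0 : ChainHomotopic E α₁.1 α₂.1 := Quotient.exact (hγ₁.symm.trans hγ₂)
      rwa [hα₁, hα₂] at h0
    have step1 : ChainHomotopic E (s ++ [z]) ((s ++ [y]) ++ [z]) :=
      my_hom_insert hs hcβ₁ hcα₁ hyz
    have step2 : ChainHomotopic E ((s ++ [y]) ++ [z]) ((s' ++ [y']) ++ [z]) := by
      refine my_hom_append z hαα ?_
      intro w hw
      rw [List.getLast?_concat] at hw
      cases hw
      exact hyz
    have step3 : ChainHomotopic E ((s' ++ [y']) ++ [z]) (s' ++ [z]) :=
      Relation.EqvGen.symm _ _ (my_hom_insert hs' hcβ₂ hcα₂ hyz')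
    have hββ : ChainHomotopic E β₁.1 β₂.1 := by
      rw [hβ₁, hβ₂]
      exact Relation.EqvGen.trans _ _ _ (Relation.EqvGen.trans _ _ _ step1 step2) step3
    rw [hA, hB]
    exact Quotient.sound hββ
  · -- (2) images
    intro D hD hDs hDE
    constructor
    · intro a
      ext x
      constructor
      · rintro ⟨c, hc, rfl⟩
        obtain ⟨α, β, s, y, z, hs, hα, hβ, hyz, hA, hC⟩ := hc
        replace hA : a = Quotient.mk (chainSetoid E bp) α := hA
        replace hC : c = Quotient.mk (chainSetoid E bp) β := hC
        have h1 : endpointMap E bp a = y := by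
          rw [hA, endpointMap_mk, hα, List.getLastD_concat]
        have h2 : endpointMap E bp c = z := by
          rw [hC, endpointMap_mk, hβ, List.getLastD_concat]
        show (endpointMap E bp a, endpointMap E bp c) ∈ D
        rw [h1, h2]
        exact hyz
      · intro hx
        obtain ⟨α, rfl⟩ := Quotient.exists_rep a
        obtain ⟨w, hw⟩ := my_exists_getLast? α.2.1.1
        have hepa : endpointMap E bp (Quotient.mk (chainSetoid E bp) α) = w := by
          rw [endpointMap_mk, List.getLastD_eq_getLast?, hw]
          rfl
        rw [hepa] at hx
        obtain ⟨β, hβeq, hβlast, hmem⟩ :=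
          my_rep_snoc hErefl α hw (show (w, x) ∈ D from hx) (hDE hx)
        refine ⟨Quotient.mk (chainSetoid E bp) β, hmem, ?_⟩
        rw [endpointMap_mk, List.getLastD_eq_getLast?, hβlast]
        rfl
    · ext ⟨u, v⟩
      constructor
      · rintro ⟨⟨p1, p2⟩, hp, heq⟩
        obtain ⟨α, β, s, y, z, hs, hα, hβ, hyz, h1, h2⟩ := hp
        replace h1 : p1 = Quotient.mk (chainSetoid E bp) α := h1
        replace h2 : p2 = Quotient.mk (chainSetoid E bp) β := h2
        have e1 : endpointMap E bp p1 = y := by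
          rw [h1, endpointMap_mk, hα, List.getLastD_concat]
        have e2 : endpointMap E bp p2 = z := by
          rw [h2, endpointMap_mk, hβ, List.getLastD_concat]
        simp only [Prod.mk.injEq] at heq
        show (u, v) ∈ D
        rw [← heq.1, ← heq.2, e1, e2]
        exact hyz
      · intro huv
        obtain ⟨l, hne, hchain, hhead, hlast⟩ := my_exists_chainList hcc hE hEsym bp u
        obtain ⟨β, hβeq, hβlast, hmem⟩ :=
          my_rep_snoc hErefl ⟨l, ⟨⟨hne, hchain⟩, hhead⟩⟩ hlast
            (show (u, v) ∈ D from huv) (hDE huv)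
        have e1 : endpointMap E bp
            (Quotient.mk (chainSetoid E bp) ⟨l, ⟨⟨hne, hchain⟩, hhead⟩⟩) = u := by
          refine (endpointMap_mk E bp _).trans ?_
          show l.getLastD bp = u
          rw [List.getLastD_eq_getLast?, hlast]
          rfl
        have e2 : endpointMap E bp (Quotient.mk (chainSetoid E bp) β) = v := by
          rw [endpointMap_mk, List.getLastD_eq_getLast?, hβlast]
          rfl
        refine ⟨(Quotient.mk (chainSetoid E bp) ⟨l, ⟨⟨hne, hchain⟩, hhead⟩⟩,
          Quotient.mk (chainSetoid E bp) β), hmem, ?_⟩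
        show (endpointMap E bp _, endpointMap E bp _) = (u, v)
        rw [e1, e2]
  · -- (3a) symmetric and contains diagonal
    intro D hD hDs hDE
    constructor
    · have hsw : ∀ p q : SpaceXE E bp,
          (p, q) ∈ starRel E bp D → (q, p) ∈ starRel E bp D := by
        rintro p q ⟨α, β, s, y, z, hs, hα, hβ, hyz, h1, h2⟩
        exact ⟨β, α, s, z, y, hs, hβ, hα, hDs.mk_mem_comm.mp hyz, h2, h1⟩
      ext ⟨p, q⟩
      exact ⟨fun h => hsw q p h, fun h => hsw p q h⟩
    · rintro ⟨p, q⟩ hpq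
      rw [mem_idRel] at hpq
      subst hpq
      obtain ⟨α, rfl⟩ := Quotient.exists_rep p
      obtain ⟨w, hw⟩ := my_exists_getLast? α.2.1.1
      obtain ⟨β, hβeq, hβlast, hmem⟩ :=
        my_rep_snoc hErefl α hw (refl_mem_uniformity hD) (hErefl w)
      have hβα : Quotient.mk (chainSetoid E bp) β = Quotient.mk (chainSetoid E bp) α := by
        refine (Quotient.sound ?_).symm
        show ChainHomotopic E α.1 β.1
        rw [hβeq]
        exact my_hom_dup α.2.1.1 α.2.1.2 hw (hErefl w)
      rwa [hβα] at hmem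
  · -- (3b) intersections
    intro D hD hDs hDE D' hD' hDs' hDE'
    rintro ⟨p, q⟩ ⟨α, β, s, y, z, hs, hα, hβ, hyz, h1, h2⟩
    exact ⟨⟨α, β, s, y, z, hs, hα, hβ, hyz.1, h1, h2⟩,
      ⟨α, β, s, y, z, hs, hα, hβ, hyz.2, h1, h2⟩⟩
  · -- (3c) composition
    intro D hD hDs hDE
    obtain ⟨W, hW, hWs, hWD⟩ := comp_symm_mem_uniformity_sets hD
    refine ⟨W ∩ E, Filter.inter_mem hW hE, ?_, Set.inter_subset_right, ?_⟩
    · show Prod.swap ⁻¹' (W ∩ E) = W ∩ E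
      rw [Set.preimage_inter]
      rw [(Set.ext fun p => ⟨fun h => hWs.symm p.2 p.1 h, fun h => hWs.symm p.1 p.2 h⟩ : Prod.swap ⁻¹' W = W), show Prod.swap ⁻¹' E = E from hEsym]
    · rintro ⟨p, q⟩ ⟨m, hpm, hmq⟩
      obtain ⟨α, β₁, s, y, z, hs, hα, hβ₁, hyz, hp, hm1⟩ := hpm
      obtain ⟨β₂, γ, t, u, v, ht, hβ₂, hγ, huv, hm2, hq⟩ := hmq
      replace hp : p = Quotient.mk (chainSetoid E bp) α := hp
      replace hm1 : m = Quotient.mk (chainSetoid E bp) β₁ := hm1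
      replace hm2 : m = Quotient.mk (chainSetoid E bp) β₂ := hm2
      replace hq : q = Quotient.mk (chainSetoid E bp) γ := hq
      have hhom : ChainHomotopic E β₁.1 β₂.1 := Quotient.exact (hm1.symm.trans hm2)
      have huz : u = z := by
        have h0 := ChainHomotopic.getLast?_eq hhom
        rw [hβ₁, hβ₂, List.getLast?_concat, List.getLast?_concat] at h0
        cases h0
        rfl
      subst huz
      have hyzE : (y, u) ∈ E := hyz.2
      have hzyE : (u, y) ∈ E := hEsym.mk_mem_comm.mp hyzE
      have hzvE : (u, v) ∈ E := huv.2
      have hyvD : (y, v) ∈ D := hWD ⟨u, hyz.1, huv.1⟩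
      have hcα : (s ++ [y]).Chain' (fun a b => (a, b) ∈ E) := by
        rw [← hα]; exact α.2.1.2
      have hcβ₁ : (s ++ [u]).Chain' (fun a b => (a, b) ∈ E) := by
        rw [← hβ₁]; exact β₁.2.1.2
      have hcβ₂ : (t ++ [u]).Chain' (fun a b => (a, b) ∈ E) := by
        rw [← hβ₂]; exact β₂.2.1.2
      have hcγ : (t ++ [v]).Chain' (fun a b => (a, b) ∈ E) := by
        rw [← hγ]; exact γ.2.1.2
      have hc1 : ((t ++ [u]) ++ [y]).Chain' (fun a b => (a, b) ∈ E) := by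
        refine List.isChain_append.mpr ?_
        refine ⟨hcβ₂, List.isChain_singleton _, ?_⟩
        intro p' hp' q' hq'
        simp only [List.getLast?_concat, Option.mem_def, Option.some.injEq] at hp'
        simp only [List.head?_cons, Option.mem_def, Option.some.injEq] at hq'
        subst hp'; subst hq'
        exact hzyE
      have hc2 : ((t ++ [u]) ++ [v]).Chain' (fun a b => (a, b) ∈ E) := by
        refine List.isChain_append.mpr ?_
        refine ⟨hcβ₂, List.isChain_singleton _, ?_⟩
        intro p' hp' q' hq'
        simp only [List.getLast?_concat, Option.mem_def, Option.some.injEq] at hp'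
        simp only [List.head?_cons, Option.mem_def, Option.some.injEq] at hq'
        subst hp'; subst hq'
        exact hzvE
      have hheadβ₂ : (t ++ [u]).head? = some bp := by
        rw [← hβ₂]; exact β₂.2.2
      refine ⟨⟨(t ++ [u]) ++ [y], ⟨⟨by simp, hc1⟩,
          by rw [my_head?_append (by simp : t ++ [u] ≠ [])]; exact hheadβ₂⟩⟩,
        ⟨(t ++ [u]) ++ [v], ⟨⟨by simp, hc2⟩,
          by rw [my_head?_append (by simp : t ++ [u] ≠ [])]; exact hheadβ₂⟩⟩,
        t ++ [u], y, v, by simp, rfl, rfl, hyvD, ?_, ?_⟩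
      · rw [hp]
        refine Quotient.sound ?_
        show ChainHomotopic E α.1 ((t ++ [u]) ++ [y])
        rw [hα]
        refine Relation.EqvGen.trans _ _ _ (my_hom_insert hs hcα hcβ₁ hzyE) ?_
        have hb : ChainHomotopic E (s ++ [u]) (t ++ [u]) := by
          rw [← hβ₁, ← hβ₂]; exact hhom
        refine my_hom_append y hb ?_
        intro w hw
        rw [List.getLast?_concat] at hw
        cases hw
        exact hzyE
      · rw [hq]
        refine Quotient.sound ?_
        show ChainHomotopic E γ.1 ((t ++ [u]) ++ [v])
        rw [hγ]
        exact my_hom_insert ht hcγ hcβ₂ hzvE
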